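/- With the notation and hypotheses of the context, suppose in addition that β > 0, τ ≥ 0, a ≥ 0, that v(-L) = v(L) = 0, v'(-L) = v'(L) = 0, and that v' is absolutely continuous with derivative v'' ∈ L²(-L,L). Define the mechanical energy E_m(v) := (β/2)‖v''‖₂² + (τ/2 + (a/4)‖v'‖₂²)‖v'‖₂², where ‖·‖₂ denotes the L²(-L,L) norm. Then there is a constant c₁ > 0 depending only on L, H, d, β, τ, a, σ_max, m₁, m₂, m₃ such that E_m(v) - (1/2) ∫_{-L}^{L} ∫_{-H-d}^{v(x)} σ(x,z) |∇h_v(x,z)|² dz dx ≥ (β/4)‖v''‖₂² - c₁(1 + ‖v‖₂²). -/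

import Mathlib

open MeasureTheory Set

lemma aux_ftc2 (L : ℝ) (hL : 0 < L) (v v' : ℝ → ℝ)
    (hderiv : ∀ x ∈ Icc (-L) L, HasDerivWithinAt v (v' x) (Icc (-L) L) x)
    (hc' : ContinuousOn v' (Icc (-L) L)) :
    ∀ t ∈ Icc (-L) L, ∫ x in t..L, v' x = v L - v t := by
  intro t ht
  have hcv : ContinuousOn v (Icc (-L) L) := fun x hx => (hderiv x hx).continuousWithinAt
  apply intervalIntegral.integral_eq_sub_of_hasDeriv_right_of_le ht.2
    (hcv.mono (Icc_subset_Icc ht.1 le_rfl))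
  · intro x hx
    have hx' : x ∈ Ioo (-L) L := ⟨lt_of_le_of_lt ht.1 hx.1, hx.2⟩
    have hmem : x ∈ Icc (-L) L := ⟨hx'.1.le, hx'.2.le⟩
    exact ((hderiv x hmem).hasDerivAt (Icc_mem_nhds hx'.1 hx'.2)).hasDerivWithinAt
  · apply ContinuousOn.intervalIntegrable
    rw [uIcc_of_le ht.2]
    exact hc'.mono (Icc_subset_Icc ht.1 le_rfl)

lemma aux_ibp (L : ℝ) (hL : 0 < L) (v v' v'' : ℝ → ℝ)
    (hderiv : ∀ x ∈ Icc (-L) L, HasDerivWithinAt v (v' x) (Icc (-L) L) x)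
    (hc' : ContinuousOn v' (Icc (-L) L))
    (hvR : v L = 0)
    (hv' : ∀ x ∈ Icc (-L) L, v' x = ∫ t in (-L)..x, v'' t)
    (hint : IntervalIntegrable v'' volume (-L) L) :
    ∫ x in (-L)..L, (v' x)^2 = - ∫ x in (-L)..L, v x * v'' x := by
  have hLL : (-L) ≤ L := by linarith
  set s : Set ℝ := Ioc (-L) L with hs
  have hsub : s ⊆ Icc (-L) L := Ioc_subset_Icc_self
  have hcv : ContinuousOn v (Icc (-L) L) := fun x hx => (hderiv x hx).continuousWithinAt
  have hftc2 : ∀ t ∈ Icc (-L) L, ∫ x in t..L, v' x = - v t := by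
    intro t ht
    rw [aux_ftc2 L hL v v' hderiv hc' t ht, hvR]; ring
  -- globally defined substitutes
  set W : ℝ → ℝ := s.indicator v'' with hW
  have hWint : Integrable W volume := hint.1.integrable_indicator measurableSet_Ioc
  set π : ℝ → ℝ := fun x => max (-L) (min L x) with hπ
  have hπmem : ∀ x, π x ∈ Icc (-L) L := fun x => ⟨le_max_left _ _, max_le hLL (min_le_left _ _)⟩
  have hπcont : Continuous π := continuous_const.max (continuous_const.min continuous_id)
  have hπeq : ∀ x ∈ Icc (-L) L, π x = x := by
    intro x hx
    simp only [hπ]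
    rw [min_eq_right hx.2, max_eq_right hx.1]
  set V' : ℝ → ℝ := fun x => v' (π x) with hV'
  have hV'cont : Continuous V' := hc'.comp_continuous hπcont hπmem
  have hV'eq : ∀ x ∈ Icc (-L) L, V' x = v' x := fun x hx => by
    show v' (π x) = v' x
    rw [hπeq x hx]
  obtain ⟨M, hM⟩ := isCompact_Icc.exists_bound_of_continuousOn hc'
  have hMV : ∀ x, |V' x| ≤ M := fun x => hM _ (hπmem x)
  have hM0 : 0 ≤ M := le_trans (abs_nonneg _) (hMV 0)
  -- the kernel
  set F : ℝ → ℝ → ℝ := fun x t => if t ≤ x then s.indicator V' x * W t else 0 with hF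
  have hFind : Function.uncurry F =
      Set.indicator {p : ℝ × ℝ | p.2 ≤ p.1} (fun p => s.indicator V' p.1 * W p.2) := by
    ext p
    simp only [Function.uncurry, hF, Set.indicator_apply, mem_setOf_eq]
  have hFmeas : AEStronglyMeasurable (Function.uncurry F) (volume.prod volume) := by
    rw [hFind]
    apply AEStronglyMeasurable.indicator _ (measurableSet_le measurable_snd measurable_fst)
    exact (((hV'cont.measurable.indicator measurableSet_Ioc).comp
      measurable_fst).aestronglyMeasurable).mul hWint.1.comp_snd
  have hFint : Integrable (Function.uncurry F) (volume.prod volume) := by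
    have hgint : Integrable (fun p : ℝ × ℝ => (Ioc (-L) L).indicator (fun _ => M) p.1 * |W p.2|)
        (volume.prod volume) :=
      Integrable.mul_prod ((integrable_indicator_iff measurableSet_Ioc).2
        (integrableOn_const measure_Ioc_lt_top.ne)) hWint.abs
    apply Integrable.mono' hgint hFmeas
    filter_upwards with p
    have h1 : |s.indicator V' p.1| ≤ (Ioc (-L) L).indicator (fun _ => M) p.1 := by
      by_cases hp : p.1 ∈ Ioc (-L) L
      · rw [Set.indicator_of_mem hp, Set.indicator_of_mem hp]
        exact hMV _
      · rw [Set.indicator_of_notMem hp, Set.indicator_of_notMem hp, abs_zero]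
    show ‖F p.1 p.2‖ ≤ _
    simp only [hF]
    split_ifs with h
    · rw [Real.norm_eq_abs, abs_mul]
      exact mul_le_mul h1 le_rfl (abs_nonneg _) (le_trans (abs_nonneg _) h1)
    · rw [norm_zero]
      exact mul_nonneg (le_trans (abs_nonneg _) h1) (abs_nonneg _)
  have swap : (∫ x, ∫ t, F x t) = ∫ t, ∫ x, F x t := integral_integral_swap hFint
  -- LHS
  have hLHS : ∀ x, (∫ t, F x t) = s.indicator (fun y => v' y * v' y) x := by
    intro x
    by_cases hx : x ∈ s
    · rw [Set.indicator_of_mem hx]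
      have h1 : ∀ t, F x t = V' x * (Iic x).indicator W t := by
        intro t
        simp only [hF, Set.indicator_apply, mem_Iic, Set.indicator_of_mem hx]
        split_ifs with h
        · rfl
        · rw [mul_zero]
      simp only [h1]
      rw [integral_const_mul, integral_indicator measurableSet_Iic,
        setIntegral_indicator measurableSet_Ioc]
      have hseteq : Iic x ∩ s = Ioc (-L) x := by
        ext t
        simp only [mem_inter_iff, mem_Iic, hs, mem_Ioc]
        exact ⟨fun h => ⟨h.2.1, h.1⟩, fun h => ⟨h.2, h.1, h.2.trans hx.2⟩⟩
      rw [hseteq, ← intervalIntegral.integral_of_le hx.1.le, ← hv' x (hsub hx),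
        hV'eq x (hsub hx)]
    · rw [Set.indicator_of_notMem hx]
      have h1 : ∀ t, F x t = 0 := by
        intro t
        simp only [hF, Set.indicator_of_notMem hx, zero_mul, ite_self]
      simp only [h1, integral_zero]
  -- RHS
  have hRHS : ∀ t, (∫ x, F x t) = s.indicator (fun y => v'' y * (- v y)) t := by
    intro t
    by_cases ht : t ∈ s
    · rw [Set.indicator_of_mem ht]
      have h1 : ∀ x, F x t = (Ici t ∩ s).indicator V' x * W t := by
        intro x
        simp only [hF]
        by_cases hx1 : t ≤ x
        · rw [if_pos hx1]
          by_cases hx2 : x ∈ s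
          · rw [Set.indicator_of_mem hx2,
              Set.indicator_of_mem (mem_inter (mem_Ici.2 hx1) hx2)]
          · rw [Set.indicator_of_notMem hx2,
              Set.indicator_of_notMem (fun hc => hx2 hc.2)]
        · rw [if_neg hx1, Set.indicator_of_notMem (fun hc => hx1 (mem_Ici.1 hc.1)), zero_mul]
      simp only [h1]
      rw [integral_mul_const, integral_indicator (measurableSet_Ici.inter measurableSet_Ioc)]
      have hseteq : Ici t ∩ s = Icc t L := by
        ext x
        simp only [mem_inter_iff, mem_Ici, hs, mem_Ioc, mem_Icc]
        exact ⟨fun h => ⟨h.1, h.2.2⟩, fun h => ⟨h.1, lt_of_lt_of_le ht.1 h.1, h.2⟩⟩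
      have hWt : W t = v'' t := Set.indicator_of_mem ht _
      rw [hseteq, setIntegral_congr_fun measurableSet_Icc
        (fun x hx => hV'eq x (Icc_subset_Icc (hsub ht).1 le_rfl hx)),
        integral_Icc_eq_integral_Ioc, ← intervalIntegral.integral_of_le (hsub ht).2,
        hftc2 t (hsub ht), hWt]
      ring
    · rw [Set.indicator_of_notMem ht]
      have hWt : W t = 0 := Set.indicator_of_notMem ht _
      have h1 : ∀ x, F x t = 0 := by
        intro x
        simp only [hF, hWt, mul_zero, ite_self]
      simp only [h1, integral_zero]
  -- assemble
  have e1 : ∫ x in (-L)..L, (v' x)^2 = ∫ x, s.indicator (fun y => v' y * v' y) x := by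
    rw [integral_indicator measurableSet_Ioc, intervalIntegral.integral_of_le hLL]
    exact setIntegral_congr_fun measurableSet_Ioc (fun x _ => by ring)
  have e2 : (∫ t, s.indicator (fun y => v'' y * (- v y)) t) = - ∫ x in (-L)..L, v x * v'' x := by
    rw [integral_indicator measurableSet_Ioc, intervalIntegral.integral_of_le hLL,
      ← integral_neg]
    exact setIntegral_congr_fun measurableSet_Ioc (fun x _ => by ring)
  calc ∫ x in (-L)..L, (v' x)^2
      = ∫ x, s.indicator (fun y => v' y * v' y) x := e1
    _ = ∫ x, ∫ t, F x t := integral_congr_ae (Filter.Eventually.of_forall fun x => (hLHS x).symm)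
    _ = ∫ t, ∫ x, F x t := swap
    _ = ∫ t, s.indicator (fun y => v'' y * (- v y)) t :=
        integral_congr_ae (Filter.Eventually.of_forall hRHS)
    _ = - ∫ x in (-L)..L, v x * v'' x := e2

lemma aux_inner (H d σmax Q : ℝ) (hH : 0 < H) (hd : 0 < d) (hσmax : 0 < σmax) (hQ : 0 ≤ Q)
    (σG : ℝ → ℝ) (w : ℝ) (hw : -H ≤ w)
    (hb1 : ∀ z ∈ Ioc (-H - d) (-H), σG z ≤ σmax * Q)
    (hb2 : ∀ z ∈ Ioc (-H) w, σG z ≤ σmax * Q / (H + w)) :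
    ∫ z in (-H - d)..w, σG z ≤ σmax * (d + 1) * Q := by
  by_cases hint : IntervalIntegrable σG volume (-H - d) w
  · have h1le : -H - d ≤ -H := by linarith
    have i1 : IntervalIntegrable σG volume (-H - d) (-H) :=
      hint.mono_set (by
        rw [uIcc_of_le h1le, uIcc_of_le (by linarith : -H - d ≤ w)]
        exact Icc_subset_Icc le_rfl hw)
    have i2 : IntervalIntegrable σG volume (-H) w :=
      hint.mono_set (by
        rw [uIcc_of_le hw, uIcc_of_le (by linarith : -H - d ≤ w)]
        exact Icc_subset_Icc h1le le_rfl)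
    rw [← intervalIntegral.integral_add_adjacent_intervals i1 i2]
    have e1 : ∫ z in (-H - d)..(-H), σG z ≤ σmax * d * Q := by
      rw [intervalIntegral.integral_of_le h1le]
      calc ∫ z in Ioc (-H - d) (-H), σG z
          ≤ ∫ _z in Ioc (-H - d) (-H), σmax * Q :=
            setIntegral_mono_on i1.1
              (integrableOn_const measure_Ioc_lt_top.ne) measurableSet_Ioc hb1
        _ = σmax * d * Q := by
            rw [setIntegral_const, Real.volume_real_Ioc_of_le (by linarith), smul_eq_mul]
            ring
    have e2 : ∫ z in (-H)..w, σG z ≤ σmax * Q := by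
      rcases eq_or_lt_of_le hw with h | h
      · rw [← h, intervalIntegral.integral_same]
        exact mul_nonneg hσmax.le hQ
      · have hHw : 0 < H + w := by linarith
        rw [intervalIntegral.integral_of_le hw]
        calc ∫ z in Ioc (-H) w, σG z
            ≤ ∫ _z in Ioc (-H) w, σmax * Q / (H + w) :=
              setIntegral_mono_on i2.1
                (integrableOn_const measure_Ioc_lt_top.ne) measurableSet_Ioc hb2
          _ = σmax * Q := by
              rw [setIntegral_const, Real.volume_real_Ioc_of_le (by linarith), smul_eq_mul,
                show w - -H = H + w by ring]
              field_simp
    have := add_le_add e1 e2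
    linarith [this, show σmax * d * Q + σmax * Q = σmax * (d + 1) * Q from by ring]
  · rw [intervalIntegral.integral_undef hint]
    exact mul_nonneg (mul_nonneg hσmax.le (by linarith)) hQ

lemma aux_sq (A B C c X Y : ℝ) (hX : 0 ≤ X) (hY : 0 ≤ Y)
    (h1 : |A| + |C| ≤ Real.sqrt X) (h2 : |B| ≤ Real.sqrt Y) :
    (A + B * c)^2 + C^2 ≤ 3 * X + 2 * Y * c^2 := by
  have hA : A^2 ≤ X := by
    have h3 : |A| ≤ Real.sqrt X := le_trans (le_add_of_nonneg_right (abs_nonneg _)) h1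
    calc A^2 = |A|^2 := (sq_abs A).symm
      _ ≤ Real.sqrt X ^ 2 := pow_le_pow_left₀ (abs_nonneg _) h3 2
      _ = X := Real.sq_sqrt hX
  have hC : C^2 ≤ X := by
    have h3 : |C| ≤ Real.sqrt X := le_trans (le_add_of_nonneg_left (abs_nonneg _)) h1
    calc C^2 = |C|^2 := (sq_abs C).symm
      _ ≤ Real.sqrt X ^ 2 := pow_le_pow_left₀ (abs_nonneg _) h3 2
      _ = X := Real.sq_sqrt hX
  have hB : B^2 ≤ Y := by
    calc B^2 = |B|^2 := (sq_abs B).symm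
      _ ≤ Real.sqrt Y ^ 2 := pow_le_pow_left₀ (abs_nonneg _) h2 2
      _ = Y := Real.sq_sqrt hY
  nlinarith [sq_nonneg (A - B * c), sq_nonneg c, mul_le_mul_of_nonneg_right hB (sq_nonneg c)]

/-- Coercivity lower bound of Lemma 3.4: there is `c₁ > 0`, depending only on
`L, H, d, β, τ, a, σ_max, m₁, m₂, m₃`, such that for all admissible data,
`E_m(v) - (1/2) ∫_D ∫_{-H-d}^{v(x)} σ |∇h_v|² dz dx ≥ (β/4)‖v''‖₂² - c₁(1 + ‖v‖₂²)`,
where `E_m(v) = (β/2)‖v''‖₂² + (τ/2 + (a/4)‖v'‖₂²)‖v'‖₂²`. -/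
theorem stmt8 (L H d β τ a σmax m₁ m₂ m₃ : ℝ)
    (hL : 0 < L) (hH : 0 < H) (hd : 0 < d) (hβ : 0 < β) (hτ : 0 ≤ τ) (ha : 0 ≤ a)
    (hσmax : 0 < σmax) (hm₁ : 0 < m₁) (hm₂ : 0 < m₂) (hm₃ : 0 < m₃) :
    ∃ c₁ > 0, ∀ (σ : ℝ → ℝ → ℝ), Measurable (Function.uncurry σ) →
      (∀ x ∈ Icc (-L) L, ∀ z ∈ Ici (-H - d), 0 ≤ σ x z ∧ σ x z ≤ σmax) →
      ∀ (h₁x h₁z h₁w h₂x h₂z h₂w : ℝ → ℝ → ℝ → ℝ),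
      (∀ x ∈ Icc (-L) L, ∀ z ∈ Icc (-H - d) (-H), ∀ w ∈ Ici (-H),
        |h₁x x z w| + |h₁z x z w| ≤ Real.sqrt (m₁ + m₂ * w ^ 2) ∧
        |h₁w x z w| ≤ Real.sqrt m₃) →
      (∀ x ∈ Icc (-L) L, ∀ w ∈ Ici (-H), ∀ z ∈ Icc (-H) w,
        |h₂x x z w| + |h₂z x z w| ≤ Real.sqrt ((m₁ + m₂ * w ^ 2) / (H + w)) ∧
        |h₂w x z w| ≤ Real.sqrt (m₃ / (H + w))) →
      ∀ (v v' v'' : ℝ → ℝ),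
      (∀ x ∈ Icc (-L) L, HasDerivWithinAt v (v' x) (Icc (-L) L) x) →
      ContinuousOn v' (Icc (-L) L) →
      (∀ x ∈ Icc (-L) L, -H ≤ v x) →
      v (-L) = 0 → v L = 0 → v' (-L) = 0 → v' L = 0 →
      (∀ x ∈ Icc (-L) L, v' x = v' (-L) + ∫ t in (-L)..x, v'' t) →
      IntervalIntegrable v'' volume (-L) L →
      IntervalIntegrable (fun t => (v'' t) ^ 2) volume (-L) L →
      (β / 4) * (∫ x in (-L)..L, (v'' x) ^ 2) -
          c₁ * (1 + ∫ x in (-L)..L, (v x) ^ 2) ≤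
        (β / 2) * (∫ x in (-L)..L, (v'' x) ^ 2) +
          (τ / 2 + (a / 4) * ∫ x in (-L)..L, (v' x) ^ 2) *
            (∫ x in (-L)..L, (v' x) ^ 2) -
          (1 / 2) * ∫ x in (-L)..L, (∫ z in (-H - d)..(v x),
            σ x z * (if z ≤ -H then
                (h₁x x z (v x) + h₁w x z (v x) * v' x) ^ 2 + (h₁z x z (v x)) ^ 2
              else
                (h₂x x z (v x) + h₂w x z (v x) * v' x) ^ 2 + (h₂z x z (v x)) ^ 2)) := by
  have hLL : -L ≤ L := by linarith
  have huIcc : uIcc (-L) L = Icc (-L) L := uIcc_of_le hLL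
  refine ⟨3*(σmax*(d+1))*L*m₁ + 3/2*(σmax*(d+1))*m₂ + (σmax*(d+1))^2*m₃^2/β + 1,
    by positivity, ?_⟩
  intro σ hσmeas hσ h₁x h₁z h₁w h₂x h₂z h₂w hb1 hb2 v v' v''
    hderiv hc' hv hvL hvR hv'L hv'R hftc hint hint2
  have hcv : ContinuousOn v (Icc (-L) L) := fun x hx => (hderiv x hx).continuousWithinAt
  have hv'eq : ∀ x ∈ Icc (-L) L, v' x = ∫ t in (-L)..x, v'' t := by
    intro x hx; rw [hftc x hx, hv'L, zero_add]
  have hA : 0 ≤ ∫ x in (-L)..L, (v'' x)^2 :=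
    intervalIntegral.integral_nonneg hLL (fun u _ => sq_nonneg _)
  have hB : 0 ≤ ∫ x in (-L)..L, (v' x)^2 :=
    intervalIntegral.integral_nonneg hLL (fun u _ => sq_nonneg _)
  have hC : 0 ≤ ∫ x in (-L)..L, (v x)^2 :=
    intervalIntegral.integral_nonneg hLL (fun u _ => sq_nonneg _)
  have hvsq : IntervalIntegrable (fun x => (v x)^2) volume (-L) L :=
    ContinuousOn.intervalIntegrable (by rw [huIcc]; exact hcv.pow 2)
  have hv'sq : IntervalIntegrable (fun x => (v' x)^2) volume (-L) L :=
    ContinuousOn.intervalIntegrable (by rw [huIcc]; exact hc'.pow 2)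
  have hvv'' : IntervalIntegrable (fun x => v x * v'' x) volume (-L) L :=
    hint.continuousOn_mul (by rw [huIcc]; exact hcv)
  -- integration by parts
  have hibp := aux_ibp L hL v v' v'' hderiv hc' hvR hv'eq hint
  set ε := β / (2 * (σmax * (d+1)) * m₃) with hεdef
  have hε : 0 < ε := by positivity
  have hyoung : ∀ u ∈ Icc (-L) L,
      -(v u * v'' u) ≤ ε/2 * (v'' u)^2 + 1/(2*ε) * (v u)^2 := by
    intro u _
    rw [← sub_nonneg]
    have e : ε/2 * (v'' u)^2 + 1/(2*ε) * (v u)^2 - -(v u * v'' u)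
        = (ε * v'' u + v u)^2 / (2*ε) := by
      field_simp
      ring
    rw [e]
    positivity
  have hBle : (∫ x in (-L)..L, (v' x)^2)
      ≤ ε/2 * (∫ x in (-L)..L, (v'' x)^2) + 1/(2*ε) * (∫ x in (-L)..L, (v x)^2) := by
    rw [hibp, ← intervalIntegral.integral_neg]
    calc ∫ x in (-L)..L, -(v x * v'' x)
        ≤ ∫ x in (-L)..L, (ε/2 * (v'' x)^2 + 1/(2*ε) * (v x)^2) :=
          intervalIntegral.integral_mono_on hLL hvv''.neg
            ((hint2.const_mul _).add (hvsq.const_mul _)) hyoung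
      _ = ε/2 * (∫ x in (-L)..L, (v'' x)^2) + 1/(2*ε) * (∫ x in (-L)..L, (v x)^2) := by
          rw [intervalIntegral.integral_add (hint2.const_mul _) (hvsq.const_mul _),
            intervalIntegral.integral_const_mul, intervalIntegral.integral_const_mul]
  have hBle2 : (σmax*(d+1)*m₃) * (∫ x in (-L)..L, (v' x)^2)
      ≤ β/4 * (∫ x in (-L)..L, (v'' x)^2)
        + ((σmax*(d+1))^2*m₃^2/β) * (∫ x in (-L)..L, (v x)^2) := by
    have hKm : (0:ℝ) < σmax*(d+1)*m₃ := by positivity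
    have e1 : σmax*(d+1)*m₃*(ε/2) = β/4 := by
      rw [hεdef]; field_simp; ring
    have e2 : σmax*(d+1)*m₃*(1/(2*ε)) = (σmax*(d+1))^2*m₃^2/β := by
      rw [hεdef]; field_simp
    calc (σmax*(d+1)*m₃) * (∫ x in (-L)..L, (v' x)^2)
        ≤ (σmax*(d+1)*m₃) * (ε/2 * (∫ x in (-L)..L, (v'' x)^2)
            + 1/(2*ε) * (∫ x in (-L)..L, (v x)^2)) :=
          mul_le_mul_of_nonneg_left hBle hKm.le
      _ = (σmax*(d+1)*m₃*(ε/2)) * (∫ x in (-L)..L, (v'' x)^2)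
            + (σmax*(d+1)*m₃*(1/(2*ε))) * (∫ x in (-L)..L, (v x)^2) := by ring
      _ = β/4 * (∫ x in (-L)..L, (v'' x)^2)
            + ((σmax*(d+1))^2*m₃^2/β) * (∫ x in (-L)..L, (v x)^2) := by rw [e1, e2]
  -- pointwise inner bound
  have hΦ : ∀ x ∈ Icc (-L) L,
      (∫ z in (-H - d)..(v x), σ x z * (if z ≤ -H then
          (h₁x x z (v x) + h₁w x z (v x) * v' x) ^ 2 + (h₁z x z (v x)) ^ 2
        else
          (h₂x x z (v x) + h₂w x z (v x) * v' x) ^ 2 + (h₂z x z (v x)) ^ 2))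
      ≤ σmax*(d+1)*(3*(m₁ + m₂*(v x)^2) + 2*m₃*(v' x)^2) := by
    intro x hx
    apply aux_inner H d σmax _ hH hd hσmax (by positivity) _ (v x) (hv x hx)
    · intro z hz
      rw [if_pos hz.2]
      obtain ⟨ha1, ha2⟩ := hb1 x hx z ⟨hz.1.le, hz.2⟩ (v x) (hv x hx)
      have hGb := aux_sq (h₁x x z (v x)) (h₁w x z (v x)) (h₁z x z (v x)) (v' x)
        (m₁ + m₂*(v x)^2) m₃ (by positivity) hm₃.le ha1 ha2
      obtain ⟨hσ0, hσ1⟩ := hσ x hx z (by simp only [mem_Ici]; linarith [hz.1])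
      calc σ x z * ((h₁x x z (v x) + h₁w x z (v x) * v' x) ^ 2 + (h₁z x z (v x)) ^ 2)
          ≤ σmax * ((h₁x x z (v x) + h₁w x z (v x) * v' x) ^ 2 + (h₁z x z (v x)) ^ 2) :=
            mul_le_mul_of_nonneg_right hσ1 (by positivity)
        _ ≤ σmax * (3*(m₁ + m₂*(v x)^2) + 2*m₃*(v' x)^2) :=
            mul_le_mul_of_nonneg_left hGb hσmax.le
    · intro z hz
      have hz1 := hz.1
      have hz2 := hz.2
      have hHw : 0 < H + v x := by linarith
      rw [if_neg (not_le.2 hz.1)]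
      obtain ⟨ha1, ha2⟩ := hb2 x hx (v x) (hv x hx) z ⟨hz.1.le, hz.2⟩
      have hGb := aux_sq (h₂x x z (v x)) (h₂w x z (v x)) (h₂z x z (v x)) (v' x)
        ((m₁ + m₂*(v x)^2)/(H + v x)) (m₃/(H + v x)) (by positivity) (by positivity) ha1 ha2
      have heq : 3*((m₁ + m₂*(v x)^2)/(H + v x)) + 2*(m₃/(H + v x))*(v' x)^2
          = (3*(m₁ + m₂*(v x)^2) + 2*m₃*(v' x)^2)/(H + v x) := by
        field_simp
      rw [heq] at hGb
      obtain ⟨hσ0, hσ1⟩ := hσ x hx z (by simp only [mem_Ici]; linarith)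
      calc σ x z * ((h₂x x z (v x) + h₂w x z (v x) * v' x) ^ 2 + (h₂z x z (v x)) ^ 2)
          ≤ σmax * ((h₂x x z (v x) + h₂w x z (v x) * v' x) ^ 2 + (h₂z x z (v x)) ^ 2) :=
            mul_le_mul_of_nonneg_right hσ1 (by positivity)
        _ ≤ σmax * ((3*(m₁ + m₂*(v x)^2) + 2*m₃*(v' x)^2)/(H + v x)) :=
            mul_le_mul_of_nonneg_left hGb hσmax.le
        _ = σmax * (3*(m₁ + m₂*(v x)^2) + 2*m₃*(v' x)^2) / (H + v x) := by ring
  -- integrated inner bound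
  have hPint : IntervalIntegrable
      (fun x => σmax*(d+1)*(3*(m₁ + m₂*(v x)^2) + 2*m₃*(v' x)^2)) volume (-L) L := by
    apply ContinuousOn.intervalIntegrable
    rw [huIcc]
    exact continuousOn_const.mul
      ((continuousOn_const.mul (continuousOn_const.add
        (continuousOn_const.mul (hcv.pow 2)))).add (continuousOn_const.mul (hc'.pow 2)))
  have hIle : (∫ x in (-L)..L, (∫ z in (-H - d)..(v x),
        σ x z * (if z ≤ -H then
            (h₁x x z (v x) + h₁w x z (v x) * v' x) ^ 2 + (h₁z x z (v x)) ^ 2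
          else
            (h₂x x z (v x) + h₂w x z (v x) * v' x) ^ 2 + (h₂z x z (v x)) ^ 2)))
      ≤ ∫ x in (-L)..L, σmax*(d+1)*(3*(m₁ + m₂*(v x)^2) + 2*m₃*(v' x)^2) := by
    by_cases hΦint : IntervalIntegrable (fun x => (∫ z in (-H - d)..(v x),
        σ x z * (if z ≤ -H then
            (h₁x x z (v x) + h₁w x z (v x) * v' x) ^ 2 + (h₁z x z (v x)) ^ 2
          else
            (h₂x x z (v x) + h₂w x z (v x) * v' x) ^ 2 + (h₂z x z (v x)) ^ 2)))
        volume (-L) L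
    · exact intervalIntegral.integral_mono_on hLL hΦint hPint hΦ
    · rw [intervalIntegral.integral_undef hΦint]
      exact intervalIntegral.integral_nonneg hLL (fun u _ => by positivity)
  have hPval : (∫ x in (-L)..L, σmax*(d+1)*(3*(m₁ + m₂*(v x)^2) + 2*m₃*(v' x)^2))
      = σmax*(d+1)*3*m₁*(2*L) + σmax*(d+1)*3*m₂*(∫ x in (-L)..L, (v x)^2)
        + σmax*(d+1)*2*m₃*(∫ x in (-L)..L, (v' x)^2) := by
    have e : ∀ x : ℝ, σmax*(d+1)*(3*(m₁ + m₂*(v x)^2) + 2*m₃*(v' x)^2)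
        = σmax*(d+1)*3*m₁ + (σmax*(d+1)*3*m₂*(v x)^2 + σmax*(d+1)*2*m₃*(v' x)^2) :=
      fun x => by ring
    simp only [e]
    rw [intervalIntegral.integral_add intervalIntegrable_const
        ((hvsq.const_mul _).add (hv'sq.const_mul _)),
      intervalIntegral.integral_add (hvsq.const_mul _) (hv'sq.const_mul _),
      intervalIntegral.integral_const, intervalIntegral.integral_const_mul,
      intervalIntegral.integral_const_mul, smul_eq_mul]
    ring
  have hTB : 0 ≤ (τ/2 + a/4 * (∫ x in (-L)..L, (v' x)^2)) * (∫ x in (-L)..L, (v' x)^2) :=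
    mul_nonneg (add_nonneg (by linarith) (mul_nonneg (by linarith) hB)) hB
  have g3 : 0 ≤ ((σmax*(d+1))*L*m₁) * (∫ x in (-L)..L, (v x)^2) :=
    mul_nonneg (by positivity) hC
  have g2 : (0:ℝ) ≤ (σmax*(d+1))^2*m₃^2/β := by positivity
  have g1 : (0:ℝ) ≤ (σmax*(d+1))*m₂ := by positivity
  linarith [hIle, hPval, hBle2, hTB, hA, hB, hC, g1, g2, g3]
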